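/- For every positive integers k, a, b with k-1 ≤ b ≤ a-k, we have ∑_{i=1}^{k} (-1)^{i-1} · C(k-1, i-1) · C(a-i, b) = C(a-k, b-k+1). -/

import Mathlib

lemma aux_alt_sum (m : ℕ) : ∀ n r : ℕ, m ≤ n → m ≤ r →
    (∑ j ∈ Finset.range (m + 1),
      ((-1 : ℤ) ^ j * (m.choose j) * ((n - j).choose r))) = ((n - m).choose (r - m)) := by
  induction m with
  | zero => intro n r _ _; simp
  | succ m ih =>
    intro n r hn hr
    obtain ⟨n, rfl⟩ : ∃ n', n = n' + 1 := ⟨n - 1, by omega⟩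
    obtain ⟨r, rfl⟩ : ∃ r', r = r' + 1 := ⟨r - 1, by omega⟩
    have hmn : m ≤ n := by omega
    have hmr : m ≤ r + 1 := by omega
    have h1 : (∑ j ∈ Finset.range (m + 1),
        ((-1 : ℤ) ^ j * (m.choose j) * ((n - j).choose (r + 1))))
        = ((n - m).choose (r + 1 - m)) := ih n (r + 1) hmn hmr
    have h2 : (∑ j ∈ Finset.range (m + 1),
        ((-1 : ℤ) ^ j * (m.choose j) * ((n + 1 - j).choose (r + 1))))
        = ((n + 1 - m).choose (r + 1 - m)) := ih (n + 1) (r + 1) (by omega) hmr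
    -- A : sum with m.choose (i+1)
    have hA : (∑ i ∈ Finset.range (m + 1),
        ((-1 : ℤ) ^ i * (m.choose (i + 1)) * ((n - i).choose (r + 1))))
        = ((n + 1).choose (r + 1) : ℤ)
          - ∑ j ∈ Finset.range (m + 1),
            ((-1 : ℤ) ^ j * (m.choose j) * ((n + 1 - j).choose (r + 1))) := by
      rw [Finset.sum_range_succ'
        (fun j => ((-1 : ℤ) ^ j * (m.choose j) * ((n + 1 - j).choose (r + 1)))) m]
      rw [Finset.sum_range_succ
        (fun i => ((-1 : ℤ) ^ i * (m.choose (i + 1)) * ((n - i).choose (r + 1)))) m]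
      have hc : ∀ i, i ∈ Finset.range m →
          ((-1 : ℤ) ^ (i + 1) * (m.choose (i + 1)) * ((n + 1 - (i + 1)).choose (r + 1)))
          = -((-1 : ℤ) ^ i * (m.choose (i + 1)) * ((n - i).choose (r + 1))) := by
        intro i _
        have e : n + 1 - (i + 1) = n - i := by omega
        rw [e, pow_succ]
        ring
      rw [Finset.sum_congr rfl hc, Finset.sum_neg_distrib]
      simp only [Nat.choose_succ_self, Nat.cast_zero, mul_zero, add_zero, pow_zero,
        Nat.choose_zero_right, Nat.cast_one, one_mul, Nat.sub_zero]
      ring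
    -- main computation
    rw [Finset.sum_range_succ'
      (fun j => ((-1 : ℤ) ^ j * ((m + 1).choose j) * ((n + 1 - j).choose (r + 1)))) (m + 1)]
    have hsplit : ∀ i, i ∈ Finset.range (m + 1) →
        ((-1 : ℤ) ^ (i + 1) * ((m + 1).choose (i + 1)) * ((n + 1 - (i + 1)).choose (r + 1)))
        = -((-1 : ℤ) ^ i * (m.choose i) * ((n - i).choose (r + 1)))
          - ((-1 : ℤ) ^ i * (m.choose (i + 1)) * ((n - i).choose (r + 1))) := by
      intro i _
      have hn' : n + 1 - (i + 1) = n - i := by omega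
      rw [hn', Nat.choose_succ_succ, pow_succ]
      push_cast
      ring
    rw [Finset.sum_congr rfl hsplit, Finset.sum_sub_distrib, Finset.sum_neg_distrib,
      h1, hA, h2]
    have e1 : n + 1 - m = (n - m) + 1 := by omega
    have e2 : n + 1 - (m + 1) = n - m := by omega
    have e3 : r + 1 - m = (r - m) + 1 := by omega
    have e4 : r + 1 - (m + 1) = r - m := by omega
    have hp : (((n - m) + 1).choose ((r - m) + 1) : ℤ)
        = ((n - m).choose (r - m) : ℤ) + ((n - m).choose ((r - m) + 1) : ℤ) := by
      rw [Nat.choose_succ_succ]; push_cast; ring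
    rw [e1, e2, e3, e4, hp]
    simp only [pow_zero, Nat.choose_zero_right, Nat.cast_one, one_mul, Nat.sub_zero]
    ring

theorem stmt_0 (k a b : ℕ) (hk : 0 < k) (ha : 0 < a) (hb : 0 < b)
    (h1 : k - 1 ≤ b) (h2 : b ≤ a - k) :
    ∑ i ∈ Finset.Icc 1 k,
        ((-1 : ℤ) ^ (i - 1) * ((k - 1).choose (i - 1)) * ((a - i).choose b))
      = ((a - k).choose (b + 1 - k)) := by
  have hak : k + 1 ≤ a := by omega
  rw [← Finset.Ico_add_one_right_eq_Icc, Finset.sum_Ico_eq_sum_range]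
  have hk1 : k + 1 - 1 = (k - 1) + 1 := by omega
  rw [hk1]
  have hc : ∀ j, j ∈ Finset.range ((k - 1) + 1) →
      ((-1 : ℤ) ^ (1 + j - 1) * ((k - 1).choose (1 + j - 1)) * ((a - (1 + j)).choose b))
      = ((-1 : ℤ) ^ j * ((k - 1).choose j) * (((a - 1) - j).choose b)) := by
    intro j _
    have e1 : 1 + j - 1 = j := by omega
    have e2 : a - (1 + j) = (a - 1) - j := by omega
    rw [e1, e2]
  rw [Finset.sum_congr rfl hc, aux_alt_sum (k - 1) (a - 1) b (by omega) h1]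
  have e1 : a - 1 - (k - 1) = a - k := by omega
  have e2 : b - (k - 1) = b + 1 - k := by omega
  rw [e1, e2]
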